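/- Let ρ > 0 and ε ∈ (0,1]. Then for every v ∈ ℝ the following three conditions are equivalent: (i) |f_ρ'(v)| ≤ 1 − ε; (ii) |v| ≤ ρ(1 − √ε); (iii) f_ρ''(v) ≥ (2/ρ)√ε. -/

import Mathlib

open Filter Asymptotics

private lemma sq_littleo : (fun t : ℝ => t ^ 2) =o[nhds (0:ℝ)] fun t => t := by
  have h1 : (fun t : ℝ => t) =o[nhds (0:ℝ)] (fun _ => (1:ℝ)) := by
    rw [isLittleO_one_iff]; exact tendsto_id
  have := h1.mul_isBigO (isBigO_refl (fun t : ℝ => t) (nhds 0))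
  simpa [pow_two] using this

private lemma cube_littleo : (fun t : ℝ => t ^ 3) =o[nhds (0:ℝ)] fun t => t := by
  have h1 : (fun t : ℝ => t ^ 2) =o[nhds (0:ℝ)] (fun _ => (1:ℝ)) := by
    rw [isLittleO_one_iff]
    have : Continuous (fun t : ℝ => t ^ 2) := by continuity
    simpa using this.tendsto 0
  have := h1.mul_isBigO (isBigO_refl (fun t : ℝ => t) (nhds 0))
  simpa [pow_succ] using this

private lemma abs_max_le (t : ℝ) : |max t 0| ≤ |t| := by
  rcases le_or_gt t 0 with h | h
  · rw [max_eq_right h]; simp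
  · rw [max_eq_left h.le]

private lemma hasDerivAt_maxsq : HasDerivAt (fun t : ℝ => max t 0 ^ 2) 0 0 := by
  rw [hasDerivAt_iff_isLittleO]
  refine (isBigO_of_le _ fun t => ?_).trans_isLittleO (by simpa using sq_littleo)
  simp only [smul_zero, sub_zero, max_self, Real.norm_eq_abs]
  calc |(max t 0) ^ 2 - 0 ^ 2| = |max t 0| ^ 2 := by
        rw [show ((0:ℝ) ^ 2 : ℝ) = 0 by norm_num, sub_zero, abs_pow]
    _ ≤ |t| ^ 2 := pow_le_pow_left₀ (abs_nonneg _) (abs_max_le t) 2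
    _ = |t ^ 2| := (abs_pow t 2).symm

private lemma hasDerivAt_maxcube : HasDerivAt (fun t : ℝ => max t 0 ^ 3) 0 0 := by
  rw [hasDerivAt_iff_isLittleO]
  refine (isBigO_of_le _ fun t => ?_).trans_isLittleO (by simpa using cube_littleo)
  simp only [smul_zero, sub_zero, max_self, Real.norm_eq_abs]
  calc |(max t 0) ^ 3 - 0 ^ 3| = |max t 0| ^ 3 := by
        rw [show ((0:ℝ) ^ 3 : ℝ) = 0 by norm_num, sub_zero, abs_pow]
    _ ≤ |t| ^ 3 := pow_le_pow_left₀ (abs_nonneg _) (abs_max_le t) 3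
    _ = |t ^ 3| := (abs_pow t 3).symm

private lemma hasDerivAt_mul_abs (v : ℝ) :
    HasDerivAt (fun w : ℝ => w * |w|) (2 * |v|) v := by
  rcases eq_or_ne v 0 with rfl | hv
  · rw [hasDerivAt_iff_isLittleO]
    refine (isBigO_of_le _ fun t => ?_).trans_isLittleO (by simpa using sq_littleo)
    simp only [smul_zero, sub_zero, abs_zero, mul_zero, Real.norm_eq_abs]
    rw [abs_mul, abs_abs, abs_pow, pow_two]
  · have h := (hasDerivAt_id v).mul (hasDerivAt_abs hv)
    refine h.congr_deriv ?_
    rcases hv.lt_or_gt with h0 | h0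
    · simp [abs_of_neg h0]; ring
    · simp [abs_of_pos h0]; ring

/-- The smoothed absolute value `f_ρ`. -/
noncomputable def smoothAbs (ρ : ℝ) (v : ℝ) : ℝ :=
  if ρ ≤ |v| then |v| else ρ / 3 + (v ^ 2 / ρ ^ 2) * (ρ - |v| / 3)

/-- Derivative of `smoothAbs`. -/
noncomputable def smoothAbsD (ρ : ℝ) (v : ℝ) : ℝ :=
  if ρ ≤ |v| then v / |v| else (2 * ρ * v - v * |v|) / ρ ^ 2

private lemma smoothAbs_closed (ρ : ℝ) (hρ : 0 < ρ) (v : ℝ) :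
    smoothAbs ρ v = |v| + max (ρ - |v|) 0 ^ 3 / (3 * ρ ^ 2) := by
  unfold smoothAbs
  split_ifs with h
  · rw [max_eq_right (by linarith)]
    simp
  · push_neg at h
    rw [max_eq_left (by linarith)]
    set u := |v| with hu
    have hv2 : v ^ 2 = u ^ 2 := by rw [hu]; exact (sq_abs v).symm
    rw [hv2]
    field_simp
    ring

private lemma sign_eq_div {v : ℝ} (hv : v ≠ 0) : (SignType.sign v : ℝ) = v / |v| := by
  rcases hv.lt_or_gt with h0 | h0
  · rw [abs_of_neg h0]; simp [h0]; field_simp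
  · rw [abs_of_pos h0]; simp [h0]; field_simp

private lemma hasDerivAt_smoothAbs (ρ : ℝ) (hρ : 0 < ρ) (v : ℝ) :
    HasDerivAt (smoothAbs ρ) (smoothAbsD ρ v) v := by
  rcases lt_trichotomy |v| ρ with h | h | h
  · -- interior: |v| < ρ
    have hs : {w : ℝ | |w| < ρ} ∈ nhds v :=
      (isOpen_lt continuous_abs continuous_const).mem_nhds h
    have heq : Set.EqOn (smoothAbs ρ)
        (fun w => ρ / 3 + w ^ 2 / ρ - w * (w * |w|) / (3 * ρ ^ 2)) {w : ℝ | |w| < ρ} := by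
      intro w hw
      simp only [Set.mem_setOf_eq] at hw
      unfold smoothAbs
      dsimp only
      rw [if_neg (not_le.2 hw)]
      field_simp
      ring
    have h1 : HasDerivAt (fun w : ℝ => w ^ 2) (2 * v) v := by
      simpa using hasDerivAt_pow 2 v
    have h2 : HasDerivAt (fun w : ℝ => w * (w * |w|)) (1 * (v * |v|) + v * (2 * |v|)) v :=
      (hasDerivAt_id v).mul (hasDerivAt_mul_abs v)
    have h3 : HasDerivAt (fun w : ℝ => ρ / 3 + w ^ 2 / ρ - w * (w * |w|) / (3 * ρ ^ 2))
        (0 + 2 * v / ρ - (1 * (v * |v|) + v * (2 * |v|)) / (3 * ρ ^ 2)) v :=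
      ((hasDerivAt_const v (ρ / 3)).add (h1.div_const ρ)).sub (h2.div_const (3 * ρ ^ 2))
    have h4 := h3.congr_of_eventuallyEq (Filter.eventuallyEq_of_mem hs heq)
    refine h4.congr_deriv ?_
    unfold smoothAbsD
    rw [if_neg (not_le.2 h)]
    field_simp
    ring
  · -- boundary: |v| = ρ
    have hv : v ≠ 0 := fun h0 => by rw [h0, abs_zero] at h; linarith
    have hD : smoothAbsD ρ v = (SignType.sign v : ℝ) := by
      unfold smoothAbsD
      rw [if_pos h.ge, sign_eq_div hv]
    rw [hD]
    have hf : smoothAbs ρ = fun w => |w| + max (ρ - |w|) 0 ^ 3 / (3 * ρ ^ 2) :=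
      funext (smoothAbs_closed ρ hρ)
    rw [hf]
    have habs : HasDerivAt (fun w : ℝ => |w|) (SignType.sign v : ℝ) v := hasDerivAt_abs hv
    have hinner : HasDerivAt (fun w : ℝ => ρ - |w|) (0 - (SignType.sign v : ℝ)) v :=
      (hasDerivAt_const v ρ).sub habs
    have houter : HasDerivAt (fun t : ℝ => max t 0 ^ 3) 0 (ρ - |v|) := by
      rw [show ρ - |v| = 0 by linarith]
      exact hasDerivAt_maxcube
    have hcomp : HasDerivAt (fun w : ℝ => max (ρ - |w|) 0 ^ 3)
        (0 * (0 - (SignType.sign v : ℝ))) v := by have := houter.comp v hinner; exact this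
    have := habs.add (hcomp.div_const (3 * ρ ^ 2))
    refine this.congr_deriv ?_
    ring
  · -- exterior: ρ < |v|
    have hv : v ≠ 0 := fun h0 => by rw [h0, abs_zero] at h; linarith
    have hs : {w : ℝ | ρ < |w|} ∈ nhds v :=
      (isOpen_lt continuous_const continuous_abs).mem_nhds h
    have heq : Set.EqOn (smoothAbs ρ) (fun w => |w|) {w : ℝ | ρ < |w|} := by
      intro w hw
      simp only [Set.mem_setOf_eq] at hw
      unfold smoothAbs
      dsimp only
      rw [if_pos hw.le]
    have h4 := (hasDerivAt_abs hv).congr_of_eventuallyEq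
      (Filter.eventuallyEq_of_mem hs heq)
    refine h4.congr_deriv ?_
    unfold smoothAbsD
    rw [if_pos h.le, sign_eq_div hv]

private lemma deriv_smoothAbs (ρ : ℝ) (hρ : 0 < ρ) :
    deriv (smoothAbs ρ) = smoothAbsD ρ :=
  funext fun v => (hasDerivAt_smoothAbs ρ hρ v).deriv

private lemma hasDerivAt_smoothAbsD_boundary_pos (ρ : ℝ) (hρ : 0 < ρ) :
    HasDerivAt (smoothAbsD ρ) 0 ρ := by
  have hs : {w : ℝ | 0 < w} ∈ nhds ρ :=
    (isOpen_lt continuous_const continuous_id).mem_nhds hρ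
  have heq : Set.EqOn (smoothAbsD ρ)
      (fun w => 1 - max (ρ - w) 0 ^ 2 / ρ ^ 2) {w : ℝ | 0 < w} := by
    intro w hw
    simp only [Set.mem_setOf_eq] at hw
    unfold smoothAbsD
    dsimp only
    rw [abs_of_pos hw]
    split_ifs with h1
    · rw [max_eq_right (by linarith), div_self hw.ne']
      norm_num
    · push_neg at h1
      rw [max_eq_left (by linarith)]
      field_simp
      ring
  have houter : HasDerivAt (fun t : ℝ => max t 0 ^ 2) 0 (ρ - ρ) := by
    rw [sub_self]; exact hasDerivAt_maxsq
  have hinner : HasDerivAt (fun w : ℝ => ρ - w) (0 - 1) ρ :=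
    (hasDerivAt_const ρ ρ).sub (hasDerivAt_id ρ)
  have hcomp : HasDerivAt (fun w : ℝ => max (ρ - w) 0 ^ 2) (0 * (0 - 1)) ρ :=
    houter.comp ρ hinner
  have h3 : HasDerivAt (fun w : ℝ => 1 - max (ρ - w) 0 ^ 2 / ρ ^ 2)
      (0 - 0 * (0 - 1) / ρ ^ 2) ρ :=
    (hasDerivAt_const ρ 1).sub (hcomp.div_const (ρ ^ 2))
  have h4 := h3.congr_of_eventuallyEq (Filter.eventuallyEq_of_mem hs heq)
  refine h4.congr_deriv ?_
  ring

private lemma hasDerivAt_smoothAbsD_boundary_neg (ρ : ℝ) (hρ : 0 < ρ) :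
    HasDerivAt (smoothAbsD ρ) 0 (-ρ) := by
  have hs : {w : ℝ | w < 0} ∈ nhds (-ρ) :=
    (isOpen_lt continuous_id continuous_const).mem_nhds (by simpa using hρ)
  have heq : Set.EqOn (smoothAbsD ρ)
      (fun w => -1 + max (ρ + w) 0 ^ 2 / ρ ^ 2) {w : ℝ | w < 0} := by
    intro w hw
    simp only [Set.mem_setOf_eq] at hw
    unfold smoothAbsD
    dsimp only
    rw [abs_of_neg hw]
    split_ifs with h1
    · rw [max_eq_right (by linarith), div_neg, div_self hw.ne]
      norm_num
    · push_neg at h1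
      rw [max_eq_left (by linarith)]
      field_simp
      ring
  have houter : HasDerivAt (fun t : ℝ => max t 0 ^ 2) 0 (ρ + -ρ) := by
    rw [add_neg_cancel]; exact hasDerivAt_maxsq
  have hinner : HasDerivAt (fun w : ℝ => ρ + w) (0 + 1) (-ρ) :=
    (hasDerivAt_const (-ρ) ρ).add (hasDerivAt_id (-ρ))
  have hcomp : HasDerivAt (fun w : ℝ => max (ρ + w) 0 ^ 2) (0 * (0 + 1)) (-ρ) :=
    houter.comp (-ρ) hinner
  have h3 : HasDerivAt (fun w : ℝ => -1 + max (ρ + w) 0 ^ 2 / ρ ^ 2)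
      (0 + 0 * (0 + 1) / ρ ^ 2) (-ρ) :=
    (hasDerivAt_const (-ρ) (-1)).add (hcomp.div_const (ρ ^ 2))
  have h4 := h3.congr_of_eventuallyEq (Filter.eventuallyEq_of_mem hs heq)
  refine h4.congr_deriv ?_
  ring

private lemma hasDerivAt_smoothAbsD (ρ : ℝ) (hρ : 0 < ρ) (v : ℝ) :
    HasDerivAt (smoothAbsD ρ) (2 / ρ ^ 2 * max (ρ - |v|) 0) v := by
  rcases lt_trichotomy |v| ρ with h | h | h
  · -- interior
    have hs : {w : ℝ | |w| < ρ} ∈ nhds v :=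
      (isOpen_lt continuous_abs continuous_const).mem_nhds h
    have heq : Set.EqOn (smoothAbsD ρ)
        (fun w => (2 * ρ * w - w * |w|) / ρ ^ 2) {w : ℝ | |w| < ρ} := by
      intro w hw
      simp only [Set.mem_setOf_eq] at hw
      unfold smoothAbsD
      dsimp only
      rw [if_neg (not_le.2 hw)]
    have h1 : HasDerivAt (fun w : ℝ => 2 * ρ * w - w * |w|) (2 * ρ * 1 - 2 * |v|) v :=
      (((hasDerivAt_id v).const_mul (2 * ρ))).sub (hasDerivAt_mul_abs v)
    have h4 := (h1.div_const (ρ ^ 2)).congr_of_eventuallyEq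
      (Filter.eventuallyEq_of_mem hs heq)
    refine h4.congr_deriv ?_
    rw [max_eq_left (by linarith)]
    field_simp
  · -- boundary
    have hmax : max (ρ - |v|) 0 = 0 := max_eq_right (by linarith)
    rw [hmax, mul_zero]
    rcases (abs_eq hρ.le).1 h with hveq | hveq
    · rw [hveq]; exact hasDerivAt_smoothAbsD_boundary_pos ρ hρ
    · rw [hveq]; exact hasDerivAt_smoothAbsD_boundary_neg ρ hρ
  · -- exterior
    have hmax : max (ρ - |v|) 0 = 0 := max_eq_right (by linarith)
    rw [hmax, mul_zero]
    rcases lt_or_ge 0 v with h0 | h0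
    · have hs : {w : ℝ | ρ < w} ∈ nhds v := by
        refine (isOpen_lt continuous_const continuous_id).mem_nhds ?_
        simpa [abs_of_pos h0] using h
      have heq : Set.EqOn (smoothAbsD ρ) (fun _ => (1:ℝ)) {w : ℝ | ρ < w} := by
        intro w hw
        simp only [Set.mem_setOf_eq] at hw
        have hw0 : 0 < w := lt_trans hρ hw
        unfold smoothAbsD
        dsimp only
        rw [abs_of_pos hw0, if_pos hw.le, div_self hw0.ne']
      exact (hasDerivAt_const v (1:ℝ)).congr_of_eventuallyEq
        (Filter.eventuallyEq_of_mem hs heq)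
    · have hvneg : v < -ρ := by
        rcases lt_or_ge v 0 with h1 | h1
        · rw [abs_of_neg h1] at h; linarith
        · have h2 : v = 0 := le_antisymm h0 h1
          rw [h2, abs_zero] at h; linarith
      have hs : {w : ℝ | w < -ρ} ∈ nhds v :=
        (isOpen_lt continuous_id continuous_const).mem_nhds hvneg
      have heq : Set.EqOn (smoothAbsD ρ) (fun _ => (-1:ℝ)) {w : ℝ | w < -ρ} := by
        intro w hw
        simp only [Set.mem_setOf_eq] at hw
        have hw0 : w < 0 := by linarith
        unfold smoothAbsD
        dsimp only
        rw [abs_of_neg hw0, if_pos (by linarith), div_neg, div_self hw0.ne]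
      exact (hasDerivAt_const v (-1:ℝ)).congr_of_eventuallyEq
        (Filter.eventuallyEq_of_mem hs heq)

theorem smoothAbs_deriv_bound_iff (ρ ε : ℝ) (hρ : 0 < ρ) (hε : ε ∈ Set.Ioc (0:ℝ) 1) (v : ℝ) :
    (|deriv (smoothAbs ρ) v| ≤ 1 - ε ↔ |v| ≤ ρ * (1 - Real.sqrt ε)) ∧
    (|v| ≤ ρ * (1 - Real.sqrt ε) ↔ (2 / ρ) * Real.sqrt ε ≤ deriv (deriv (smoothAbs ρ)) v) := by
  obtain ⟨hε0, hε1⟩ := hε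
  set s := Real.sqrt ε with hsdef
  have hs0 : 0 < s := Real.sqrt_pos.2 hε0
  have hs1 : s ≤ 1 := Real.sqrt_le_one.mpr hε1
  have hs2 : s ^ 2 = ε := Real.sq_sqrt hε0.le
  rw [deriv_smoothAbs ρ hρ, (hasDerivAt_smoothAbsD ρ hρ v).deriv]
  constructor
  · unfold smoothAbsD
    split_ifs with h
    · -- |v| ≥ ρ : both sides false
      have hv : v ≠ 0 := fun h0 => by rw [h0, abs_zero] at h; linarith
      have h1 : abs (v / |v|) = 1 := by
        rw [abs_div, abs_abs, div_self (abs_ne_zero.2 hv)]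
      rw [h1]
      constructor
      · intro h2; linarith
      · intro h2; nlinarith
    · push_neg at h
      have hpos : (0:ℝ) < ρ ^ 2 := by positivity
      have habs : abs ((2 * ρ * v - v * |v|) / ρ ^ 2) = |v| * (2 * ρ - |v|) / ρ ^ 2 := by
        rw [abs_div, abs_of_pos hpos]
        congr 1
        rw [show 2 * ρ * v - v * |v| = v * (2 * ρ - |v|) by ring, abs_mul,
          abs_of_pos (by linarith : (0:ℝ) < 2 * ρ - |v|)]
      rw [habs, div_le_iff₀ hpos]
      have hu0 : 0 ≤ |v| := abs_nonneg v
      constructor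
      · intro h2
        nlinarith [sq_nonneg (ρ - |v| - s * ρ), sq_nonneg (ρ - |v| + s * ρ),
          mul_pos hs0 hρ]
      · intro h2
        nlinarith [mul_nonneg (by nlinarith : (0:ℝ) ≤ ρ - |v| - s * ρ)
          (by nlinarith : (0:ℝ) ≤ ρ - |v| + s * ρ)]
  · rcases le_or_gt ρ |v| with h | h
    · rw [max_eq_right (by linarith), mul_zero]
      constructor
      · intro h2; nlinarith
      · intro h2
        have hpos : (0:ℝ) < 2 / ρ * s := by positivity
        linarith
    · rw [max_eq_left (by linarith)]
      rw [div_mul_eq_mul_div, div_mul_eq_mul_div, div_le_div_iff₀ hρ (by positivity)]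
      constructor <;> intro h2 <;> nlinarith
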